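/- For fixed m ∈ ℝ, w ∈ ℝ^4, γ > 0, q > 1, and F convex differentiable with F'(p) ∈ ℝ, the function p ↦ Q_{m,w}(p,0) is continuous and strictly increasing on [prox_{γF}(m), +∞) and tends to +∞ as p → +∞; moreover Q_{m,w}(prox_{γF}(m), 0) = −(γ/q')|P_K w|^q ≤ 0. Consequently Q_{m,w}(·,0) has a unique root p* ≥ prox_{γF}(m) whenever Q_{m,w}(prox_{γF}(m),0) < 0. -/

import Mathlib

open scoped BigOperators
open Classical

noncomputable section

/-- Euclidean norm on ℝ⁴. -/
def nrm4 (w : Fin 4 → ℝ) : ℝ := Real.sqrt (∑ i, (w i) ^ 2)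

/-- Euclidean projection onto `K = ℝ₊ × ℝ₋ × ℝ₊ × ℝ₋`. -/
def PK (w : Fin 4 → ℝ) : Fin 4 → ℝ := ![max (w 0) 0, min (w 1) 0, max (w 2) 0, min (w 3) 0]

/-- The auxiliary function `Q_{m,w}(p,δ)`. -/
def Qfun (q q' γ : ℝ) (F' : ℝ → ℝ) (m : ℝ) (w : Fin 4 → ℝ) (p δ : ℝ) : ℝ :=
  (p + γ * F' p - m + δ) *
      (p + γ ^ (2 / q) * q' ^ (1 - 2 / q) * (p + γ * F' p - m + δ) ^ (1 - 2 / q)) ^ q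
    - (γ / q') * nrm4 (PK w) ^ q

/-- with `z₀ = prox_{γF}(m)` (the unique `z₀ ≥ 0` with
`z₀ + γF'(z₀) = m`), the map `p ↦ Q_{m,w}(p,0)` is continuous and strictly
increasing on `[z₀, ∞)`, tends to `+∞`, and `Q_{m,w}(z₀,0) = −(γ/q')|P_K w|^q ≤ 0`;
hence it has a unique root `p* ≥ z₀` whenever `Q_{m,w}(z₀,0) < 0`. -/
theorem stmt13 (q q' γ : ℝ) (hq : 1 < q) (hconj : 1 / q + 1 / q' = 1) (hγ : 0 < γ)
    (F' : ℝ → ℝ)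
    (hF'mono : MonotoneOn F' (Set.Ici 0))
    (hF'cont : ContinuousOn F' (Set.Ici 0))
    (m : ℝ) (w : Fin 4 → ℝ)
    (z₀ : ℝ) (hz₀ : 0 ≤ z₀) (hz : z₀ + γ * F' z₀ = m) :
    ContinuousOn (fun p => Qfun q q' γ F' m w p 0) (Set.Ici z₀)
    ∧ StrictMonoOn (fun p => Qfun q q' γ F' m w p 0) (Set.Ici z₀)
    ∧ Filter.Tendsto (fun p => Qfun q q' γ F' m w p 0) Filter.atTop Filter.atTop
    ∧ Qfun q q' γ F' m w z₀ 0 = -(γ / q') * nrm4 (PK w) ^ q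
    ∧ Qfun q q' γ F' m w z₀ 0 ≤ 0
    ∧ (Qfun q q' γ F' m w z₀ 0 < 0 →
        ∃! p : ℝ, z₀ ≤ p ∧ Qfun q q' γ F' m w p 0 = 0) := by
  have hq0 : (0:ℝ) < q := lt_trans one_pos hq
  have hq1' : 0 < 1/q := by positivity
  have hq1 : 1/q < 1 := by rw [div_lt_one hq0]; exact hq
  have hq'pos : 0 < q' := by
    have h1 : 0 < 1/q' := by linarith
    exact one_div_pos.mp h1
  set c : ℝ := γ ^ (2/q) * q' ^ (1 - 2/q) with hc
  have hcpos : 0 < c := mul_pos (Real.rpow_pos_of_pos hγ _) (Real.rpow_pos_of_pos hq'pos _)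
  set C : ℝ := (γ / q') * nrm4 (PK w) ^ q with hC
  have hCnn : 0 ≤ C :=
    mul_nonneg (by positivity) (Real.rpow_nonneg (Real.sqrt_nonneg _) _)
  set g : ℝ → ℝ := fun p => p + γ * F' p - m with hg
  have hgz : g z₀ = 0 := by simp only [hg]; linarith
  have hgmono : StrictMonoOn g (Set.Ici z₀) := by
    intro a ha b hb hab
    have h1 : F' a ≤ F' b :=
      hF'mono (le_trans hz₀ ha) (le_trans hz₀ hb) hab.le
    have h2 := mul_le_mul_of_nonneg_left h1 hγ.le
    simp only [hg]; linarith
  have hgnn : ∀ p ∈ Set.Ici z₀, 0 ≤ g p := by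
    intro p hp
    rcases eq_or_lt_of_le (Set.mem_Ici.mp hp) with h | h
    · rw [← h, hgz]
    · rw [← hgz]; exact (hgmono Set.self_mem_Ici hp h).le
  set u : ℝ → ℝ := fun p => p * g p ^ (1/q) + c * g p ^ (1 - 1/q) with hu
  have hunn : ∀ p ∈ Set.Ici z₀, 0 ≤ u p := by
    intro p hp
    have hgp := hgnn p hp
    have hp0 : 0 ≤ p := le_trans hz₀ hp
    exact add_nonneg (mul_nonneg hp0 (Real.rpow_nonneg hgp _))
      (mul_nonneg hcpos.le (Real.rpow_nonneg hgp _))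
  have hQform : ∀ p, Qfun q q' γ F' m w p 0
      = g p * (p + c * g p ^ (1 - 2/q)) ^ q - C := by
    intro p
    simp only [Qfun, hg, hc, hC, add_zero]
  have hkey : ∀ p ∈ Set.Ici z₀, Qfun q q' γ F' m w p 0 = u p ^ q - C := by
    intro p hp
    have hgp := hgnn p hp
    have hp0 : 0 ≤ p := le_trans hz₀ hp
    rw [hQform]
    rcases eq_or_lt_of_le hgp with h0 | h0
    · have hgp0 : g p = 0 := h0.symm
      have hup : u p = 0 := by
        simp only [hu, hgp0, Real.zero_rpow (ne_of_gt hq1'),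
          Real.zero_rpow (by linarith : (1:ℝ) - 1/q ≠ 0)]
        ring
      rw [hgp0, hup, Real.zero_rpow (ne_of_gt hq0), zero_mul]
    · have e0 : g p ^ (1/q) * g p ^ (1 - 2/q) = g p ^ (1 - 1/q) := by
        rw [← Real.rpow_add h0]; congr 1; ring
      have e1 : u p = g p ^ (1/q) * (p + c * g p ^ (1 - 2/q)) := by
        simp only [hu]; rw [← e0]; ring
      have hvnn : 0 ≤ p + c * g p ^ (1 - 2/q) :=
        add_nonneg hp0 (mul_nonneg hcpos.le (Real.rpow_nonneg hgp _))
      have e2 : (g p ^ (1/q)) ^ q = g p := by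
        rw [← Real.rpow_mul hgp, one_div_mul_cancel (ne_of_gt hq0), Real.rpow_one]
      rw [e1, Real.mul_rpow (Real.rpow_nonneg hgp _) hvnn, e2]
  -- continuity
  have hsub : Set.Ici z₀ ⊆ Set.Ici (0:ℝ) := Set.Ici_subset_Ici.mpr hz₀
  have hgcont : ContinuousOn g (Set.Ici z₀) := by
    simp only [hg]
    exact ((continuousOn_id.add (continuousOn_const.mul (hF'cont.mono hsub))).sub
      continuousOn_const)
  have hucont : ContinuousOn u (Set.Ici z₀) := by
    simp only [hu]
    exact (continuousOn_id.mul (hgcont.rpow_const fun x _ => Or.inr hq1'.le)).add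
      (continuousOn_const.mul (hgcont.rpow_const fun x _ => Or.inr (by linarith)))
  have hφcont : ContinuousOn (fun p => u p ^ q - C) (Set.Ici z₀) :=
    (hucont.rpow_const fun x _ => Or.inr hq0.le).sub continuousOn_const
  have hQcont : ContinuousOn (fun p => Qfun q q' γ F' m w p 0) (Set.Ici z₀) :=
    hφcont.congr fun p hp => hkey p hp
  -- strict monotonicity
  have humono : StrictMonoOn u (Set.Ici z₀) := by
    intro a ha b hb hab
    have hga := hgnn a ha
    have hglt : g a < g b := hgmono ha hb hab
    have h1 : g a ^ (1/q) ≤ g b ^ (1/q) := Real.rpow_le_rpow hga hglt.le hq1'.le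
    have h2 : g a ^ (1 - 1/q) < g b ^ (1 - 1/q) :=
      Real.rpow_lt_rpow hga hglt (by linarith)
    have ha0 : 0 ≤ a := le_trans hz₀ ha
    have t1 : a * g a ^ (1/q) ≤ b * g b ^ (1/q) :=
      mul_le_mul hab.le h1 (Real.rpow_nonneg hga _) (by linarith)
    have t2 : c * g a ^ (1 - 1/q) < c * g b ^ (1 - 1/q) :=
      mul_lt_mul_of_pos_left h2 hcpos
    simp only [hu]; linarith
  have hQmono : StrictMonoOn (fun p => Qfun q q' γ F' m w p 0) (Set.Ici z₀) := by
    intro a ha b hb hab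
    have := Real.rpow_lt_rpow (hunn a ha) (humono ha hb hab) hq0
    dsimp only
    rw [hkey a ha, hkey b hb]
    linarith
  -- tendsto
  have hgtend : Filter.Tendsto g Filter.atTop Filter.atTop := by
    refine Filter.tendsto_atTop_mono' Filter.atTop
      (f₁ := fun p => p + (γ * F' z₀ - m)) ?_
      (Filter.tendsto_atTop_add_const_right _ _ Filter.tendsto_id)
    filter_upwards [Filter.eventually_ge_atTop z₀] with p hp
    have h1 : F' z₀ ≤ F' p := hF'mono hz₀ (le_trans hz₀ hp) hp
    have h2 := mul_le_mul_of_nonneg_left h1 hγ.le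
    simp only [hg]; linarith
  have hutend : Filter.Tendsto u Filter.atTop Filter.atTop := by
    refine Filter.tendsto_atTop_mono' Filter.atTop
      (f₁ := fun p => c * g p ^ (1 - 1/q)) ?_
      (((tendsto_rpow_atTop (by linarith)).comp hgtend).const_mul_atTop hcpos)
    filter_upwards [Filter.eventually_ge_atTop z₀] with p hp
    have hgp := hgnn p hp
    have hp0 : 0 ≤ p := le_trans hz₀ hp
    have : 0 ≤ p * g p ^ (1/q) := mul_nonneg hp0 (Real.rpow_nonneg hgp _)
    simp only [hu]; linarith
  have hQtend : Filter.Tendsto (fun p => Qfun q q' γ F' m w p 0)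
      Filter.atTop Filter.atTop := by
    have h1 : Filter.Tendsto (fun p => u p ^ q - C) Filter.atTop Filter.atTop := by
      have := (tendsto_rpow_atTop hq0).comp hutend
      simpa [sub_eq_add_neg] using
        Filter.tendsto_atTop_add_const_right _ (-C) this
    apply h1.congr'
    filter_upwards [Filter.eventually_ge_atTop z₀] with p hp
    exact (hkey p hp).symm
  -- value at z₀
  have hval : Qfun q q' γ F' m w z₀ 0 = -C := by
    rw [hQform, hgz, zero_mul, zero_sub]
  refine ⟨hQcont, hQmono, hQtend, by rw [hval, hC]; ring, by rw [hval]; linarith, ?_⟩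
  intro hneg
  obtain ⟨b, hbz, hb0⟩ : ∃ b, z₀ ≤ b ∧ 0 ≤ Qfun q q' γ F' m w b 0 := by
    have := (hQtend.eventually_ge_atTop 0).and (Filter.eventually_ge_atTop z₀)
    obtain ⟨b, hb⟩ := this.exists
    exact ⟨b, hb.2, hb.1⟩
  have hIcc : Set.Icc z₀ b ⊆ Set.Ici z₀ := Set.Icc_subset_Ici_self
  have hiv := intermediate_value_Icc hbz (hQcont.mono hIcc)
  have h0mem : (0:ℝ) ∈ Set.Icc (Qfun q q' γ F' m w z₀ 0) (Qfun q q' γ F' m w b 0) :=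
    ⟨le_of_lt hneg, hb0⟩
  obtain ⟨p, hpmem, hp0⟩ := hiv h0mem
  have hp0' : Qfun q q' γ F' m w p 0 = 0 := hp0
  refine ⟨p, ⟨hpmem.1, hp0'⟩, ?_⟩
  intro y hy
  exact hQmono.injOn hy.1 (hIcc hpmem) (hy.2.trans hp0'.symm)
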